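/- Let N, M ≥ 1 and let 𝒬 ⊆ ℝ^{N×M} be a nonempty compact convex set, each element of which is row-stochastic with strictly positive entries. Then strong duality holds between the robust channel capacity problem and its dual: sup_{p ∈ Δ_N} inf_{Q ∈ 𝒬} I(p,Q) = inf over v ∈ ℝ^M and Q ∈ 𝒬 of [ log( Σ_{m=1}^M exp(v_m) ) + max_{1 ≤ n ≤ N} Σ_{m=1}^M Q_{nm} ( log Q_{nm} − v_m ) ]. -/

import Mathlib

open Real

/-- Average mutual information `I(p,Q)`. -/
noncomputable def AMI {N M : ℕ} (p : Fin N → ℝ) (Q : Fin N → Fin M → ℝ) : ℝ :=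
  ∑ n, ∑ m, p n * Q n m * Real.log (Q n m / ∑ l, p l * Q l m)

/-- `Q` is row-stochastic with strictly positive entries. -/
def rowStochPos {N M : ℕ} (Q : Fin N → Fin M → ℝ) : Prop :=
  (∀ n m, 0 < Q n m) ∧ ∀ n, ∑ m, Q n m = 1

/-- Robust channel capacity `sup_{p ∈ Δ_N} inf_{Q ∈ 𝒬} I(p,Q)`. -/
noncomputable def robustCap {N M : ℕ} (𝒬 : Set (Fin N → Fin M → ℝ)) : ℝ :=
  sSup { x | ∃ p ∈ stdSimplex ℝ (Fin N), x = sInf { y | ∃ Q ∈ 𝒬, y = AMI p Q } }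


/-- `a - b ≤ a log(a/b)` for `a ≥ 0`, `b > 0`. -/
lemma key_ineq {a b : ℝ} (ha : 0 ≤ a) (hb : 0 < b) : a - b ≤ a * Real.log (a / b) := by
  rcases eq_or_lt_of_le ha with h | h
  · simp [← h]; linarith
  · have hba : 0 < b / a := div_pos hb h
    have hlog := Real.log_le_sub_one_of_pos hba
    have hrw : Real.log (a / b) = - Real.log (b / a) := by
      rw [← Real.log_inv]; congr 1; rw [inv_div]
    have hba' : a * (b / a) = b := by field_simp
    nlinarith [hlog, h]

lemma gibbs_sum {ι : Type*} [Fintype ι] {a b : ι → ℝ} (ha : ∀ i, 0 ≤ a i) (hb : ∀ i, 0 < b i)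
    (hab : ∑ i, a i = ∑ i, b i) : 0 ≤ ∑ i, a i * Real.log (a i / b i) := by
  have h := Finset.sum_le_sum (fun i (_ : i ∈ Finset.univ) => key_ineq (ha i) (hb i))
  rw [Finset.sum_sub_distrib, hab] at h
  linarith

lemma logsum2 {a₁ a₂ b₁ b₂ : ℝ} (ha₁ : 0 < a₁) (ha₂ : 0 < a₂) (hb₁ : 0 < b₁) (hb₂ : 0 < b₂) :
    (a₁ + a₂) * Real.log ((a₁ + a₂) / (b₁ + b₂)) ≤
      a₁ * Real.log (a₁ / b₁) + a₂ * Real.log (a₂ / b₂) := by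
  have hA : (0:ℝ) < a₁ + a₂ := by positivity
  have hB : (0:ℝ) < b₁ + b₂ := by positivity
  have hAB : 0 < (a₁ + a₂) / (b₁ + b₂) := div_pos hA hB
  have h₁ := key_ineq ha₁.le (mul_pos hb₁ hAB)
  have h₂ := key_ineq ha₂.le (mul_pos hb₂ hAB)
  have e₁ : Real.log (a₁ / (b₁ * ((a₁ + a₂) / (b₁ + b₂))))
      = Real.log (a₁ / b₁) - Real.log ((a₁ + a₂) / (b₁ + b₂)) := by
    rw [Real.log_div ha₁.ne' (by positivity), Real.log_mul hb₁.ne' hAB.ne',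
        Real.log_div ha₁.ne' hb₁.ne']
    ring
  have e₂ : Real.log (a₂ / (b₂ * ((a₁ + a₂) / (b₁ + b₂))))
      = Real.log (a₂ / b₂) - Real.log ((a₁ + a₂) / (b₁ + b₂)) := by
    rw [Real.log_div ha₂.ne' (by positivity), Real.log_mul hb₂.ne' hAB.ne',
        Real.log_div ha₂.ne' hb₂.ne']
    ring
  rw [e₁, mul_sub] at h₁
  rw [e₂, mul_sub] at h₂
  have hs : (b₁ + b₂) * ((a₁ + a₂) / (b₁ + b₂)) = a₁ + a₂ := by field_simp
  nlinarith [h₁, h₂]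

lemma kl_point_convex {θ τ x₁ y₁ x₂ y₂ : ℝ} (hθ : 0 ≤ θ) (hτ : 0 ≤ τ) (hsum : θ + τ = 1)
    (hx₁ : 0 < x₁) (hy₁ : 0 < y₁) (hx₂ : 0 < x₂) (hy₂ : 0 < y₂) :
    (θ * x₁ + τ * x₂) * Real.log ((θ * x₁ + τ * x₂) / (θ * y₁ + τ * y₂)) ≤
      θ * (x₁ * Real.log (x₁ / y₁)) + τ * (x₂ * Real.log (x₂ / y₂)) := by
  rcases eq_or_lt_of_le hθ with h0 | hθ'
  · have : τ = 1 := by linarith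
    simp [← h0, this]
  · rcases eq_or_lt_of_le hτ with h0 | hτ'
    · have : θ = 1 := by linarith
      simp [← h0, this]
    · have h := logsum2 (mul_pos hθ' hx₁) (mul_pos hτ' hx₂) (mul_pos hθ' hy₁) (mul_pos hτ' hy₂)
      have e₁ : θ * x₁ / (θ * y₁) = x₁ / y₁ := by
        rw [mul_div_mul_left _ _ hθ'.ne']
      have e₂ : τ * x₂ / (τ * y₂) = x₂ / y₂ := by
        rw [mul_div_mul_left _ _ hτ'.ne']
      rw [e₁, e₂] at h
      calc (θ * x₁ + τ * x₂) * Real.log ((θ * x₁ + τ * x₂) / (θ * y₁ + τ * y₂))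
          ≤ θ * x₁ * Real.log (x₁ / y₁) + τ * x₂ * Real.log (x₂ / y₂) := h
        _ = θ * (x₁ * Real.log (x₁ / y₁)) + τ * (x₂ * Real.log (x₂ / y₂)) := by ring


lemma minimax_sep {N : ℕ} (hN : (Finset.univ : Finset (Fin N)).Nonempty)
    {E : Type*} [AddCommGroup E] [Module ℝ E] {Z : Set E} (hZne : Z.Nonempty)
    (c : Fin N → E → ℝ) (hcc : ∀ n, ConvexOn ℝ Z (c n)) (hnn : ∀ n, ∀ z ∈ Z, 0 ≤ c n z) :
    ∃ p ∈ stdSimplex ℝ (Fin N), ∀ z ∈ Z,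
      sInf {x | ∃ z' ∈ Z, x = Finset.univ.sup' hN fun n => c n z'} ≤ ∑ n, p n * c n z := by
  classical
  obtain ⟨n₀, -⟩ := id hN
  obtain ⟨z₀, hz₀⟩ := hZne
  set T : Set ℝ := {x | ∃ z' ∈ Z, x = Finset.univ.sup' hN fun n => c n z'} with hTdef
  have hTbdd : BddBelow T := by
    refine ⟨0, ?_⟩
    rintro x ⟨z, hz, rfl⟩
    exact le_trans (hnn n₀ z hz) (Finset.le_sup' (fun n => c n z) (Finset.mem_univ n₀))
  set β := sInf T with hβdef
  have hβle : ∀ z ∈ Z, β ≤ Finset.univ.sup' hN fun n => c n z := fun z hz =>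
    csInf_le hTbdd ⟨z, hz, rfl⟩
  set K : Set (Fin N → ℝ) := {y | ∃ z ∈ Z, ∀ n, c n z ≤ y n} with hKdef
  set C : Set (Fin N → ℝ) := {y | ∀ n, y n < β} with hCdef
  have hKconv : Convex ℝ K := by
    rintro y₁ ⟨z₁, hz₁, h₁⟩ y₂ ⟨z₂, hz₂, h₂⟩ a b ha hb hab
    refine ⟨a • z₁ + b • z₂, (hcc n₀).1 hz₁ hz₂ ha hb hab, fun n => ?_⟩
    calc c n (a • z₁ + b • z₂) ≤ a * c n z₁ + b * c n z₂ := (hcc n).2 hz₁ hz₂ ha hb hab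
      _ ≤ a * y₁ n + b * y₂ n :=
        add_le_add (mul_le_mul_of_nonneg_left (h₁ n) ha) (mul_le_mul_of_nonneg_left (h₂ n) hb)
      _ = (a • y₁ + b • y₂) n := by simp
  have hCeq : C = ⋂ n, (fun y : Fin N → ℝ => y n) ⁻¹' Set.Iio β := by
    ext y; simp [hCdef, Set.mem_iInter]
  have hCconv : Convex ℝ C := by
    rw [hCeq]
    exact convex_iInter fun n =>
      (convex_Iio β).linear_preimage (LinearMap.proj (R := ℝ) (φ := fun _ : Fin N => ℝ) n)
  have hCopen : IsOpen C := by
    rw [hCeq]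
    exact isOpen_iInter_of_finite fun n => (isOpen_Iio).preimage (continuous_apply n)
  have hdisj : Disjoint C K := by
    rw [Set.disjoint_left]
    rintro y hyC ⟨z, hz, hle⟩
    have : Finset.univ.sup' hN (fun n => c n z) < β :=
      (Finset.sup'_lt_iff hN).2 fun n _ => lt_of_le_of_lt (hle n) (hyC n)
    exact absurd (hβle z hz) (not_le.2 this)
  obtain ⟨f, u, hfC, hfK⟩ := geometric_hahn_banach_open hCconv hCopen hKconv hdisj
  set e : Fin N → (Fin N → ℝ) := fun i j => if i = j then 1 else 0 with hedef
  have hf : ∀ y : Fin N → ℝ, f y = ∑ n, y n * f (e n) := by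
    intro y
    conv_lhs => rw [pi_eq_sum_univ y]
    rw [map_sum]
    exact Finset.sum_congr rfl fun n _ => by rw [map_smul, smul_eq_mul]
  -- membership facts
  have hconstC : ∀ ε : ℝ, 0 < ε → (fun _ : Fin N => β - ε) ∈ C := fun ε hε n => by simp; linarith
  have hfconst : ∀ x : ℝ, f (fun _ : Fin N => x) = x * ∑ n, f (e n) := by
    intro x; rw [hf]; rw [Finset.mul_sum]
  -- nonnegativity of coefficients
  have hp0 : ∀ n, 0 ≤ f (e n) := by
    intro n
    by_contra hneg
    push_neg at hneg
    have haux : ∀ t : ℝ, 0 ≤ t → (β - 1) * (∑ k, f (e k)) - t * f (e n) < u := by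
      intro t ht
      have hmem : ((fun _ : Fin N => β - 1) - t • e n) ∈ C := by
        intro k
        simp only [Pi.sub_apply, Pi.smul_apply, smul_eq_mul, hedef]
        set_option linter.unnecessarySeqFocus false in
        by_cases hk : n = k <;> simp [hk] <;> nlinarith
      have := hfC _ hmem
      rwa [map_sub, map_smul, smul_eq_mul, hfconst] at this
    have hau : (β - 1) * (∑ k, f (e k)) < u := by simpa using haux 0 le_rfl
    set t₀ := (u - (β - 1) * (∑ k, f (e k)) + 1) / (-(f (e n))) with ht₀def
    have hden : 0 < -(f (e n)) := by linarith
    have ht₀ : 0 ≤ t₀ := le_of_lt (div_pos (by linarith) hden)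
    have hcan : t₀ * (-(f (e n))) = u - (β - 1) * (∑ k, f (e k)) + 1 :=
      div_mul_cancel₀ _ hden.ne'
    have := haux t₀ ht₀
    nlinarith
  have hS0 : 0 ≤ ∑ n, f (e n) := Finset.sum_nonneg fun n _ => hp0 n
  -- strict positivity of the sum
  have hSpos : 0 < ∑ n, f (e n) := by
    rcases eq_or_lt_of_le hS0 with h0 | h
    · exfalso
      have hall : ∀ n, f (e n) = 0 := by
        intro n
        have := (Finset.sum_eq_zero_iff_of_nonneg (fun k _ => hp0 k)).1 h0.symm
        exact this n (Finset.mem_univ n)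
      have hzero : ∀ y : Fin N → ℝ, f y = 0 := by
        intro y; rw [hf]; simp [hall]
      have h1 := hfC _ (hconstC 1 one_pos)
      have h2 := hfK (fun n => c n z₀) ⟨z₀, hz₀, fun n => le_rfl⟩
      rw [hzero] at h1
      rw [hzero] at h2
      linarith
    · exact h
  -- β * S ≤ u
  have hβS : β * (∑ n, f (e n)) ≤ u := by
    by_contra hlt
    push_neg at hlt
    set ε := (β * (∑ n, f (e n)) - u) / (∑ n, f (e n)) with hεdef
    have hε : 0 < ε := div_pos (by linarith) hSpos
    have := hfC _ (hconstC ε hε)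
    rw [hfconst] at this
    have hεS : ε * (∑ n, f (e n)) = β * (∑ n, f (e n)) - u := div_mul_cancel₀ _ hSpos.ne'
    nlinarith
  refine ⟨fun n => f (e n) / (∑ k, f (e k)), ⟨fun n => div_nonneg (hp0 n) hS0, ?_⟩, ?_⟩
  · rw [← Finset.sum_div, div_self hSpos.ne']
  · intro z hz
    have hmemK : (fun n => c n z) ∈ K := ⟨z, hz, fun n => le_rfl⟩
    have h1 : u ≤ ∑ n, c n z * f (e n) := by
      have := hfK _ hmemK
      rwa [hf] at this
    rw [show (∑ n, (fun k => f (e k) / (∑ j, f (e j))) n * c n z)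
        = (∑ n, c n z * f (e n)) / (∑ j, f (e j)) by
      rw [Finset.sum_div]; exact Finset.sum_congr rfl fun n _ => by ring]
    rw [le_div_iff₀ hSpos]
    calc β * (∑ j, f (e j)) ≤ u := hβS
      _ ≤ ∑ n, c n z * f (e n) := h1

noncomputable def Dkl {M : ℕ} (q r : Fin M → ℝ) : ℝ := ∑ m, q m * Real.log (q m / r m)

lemma AMI_eq {N M : ℕ} (p : Fin N → ℝ) (Q : Fin N → Fin M → ℝ) :
    AMI p Q = ∑ n, p n * Dkl (Q n) (fun m => ∑ l, p l * Q l m) := by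
  unfold AMI Dkl
  refine Finset.sum_congr rfl fun n _ => ?_
  rw [Finset.mul_sum]
  exact Finset.sum_congr rfl fun m _ => by ring

lemma mix_pos {N M : ℕ} {p : Fin N → ℝ} (hp : p ∈ stdSimplex ℝ (Fin N))
    {Q : Fin N → Fin M → ℝ} (hQpos : ∀ n m, 0 < Q n m) (m : Fin M) :
    0 < ∑ l, p l * Q l m := by
  have hex : ∃ l, 0 < p l := by
    by_contra h
    push_neg at h
    have hz : ∑ l, p l = 0 := Finset.sum_eq_zero fun l _ => le_antisymm (h l) (hp.1 l)
    rw [hp.2] at hz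
    norm_num at hz
  obtain ⟨l, hl⟩ := hex
  exact Finset.sum_pos' (fun i _ => mul_nonneg (hp.1 i) (hQpos i m).le)
    ⟨l, Finset.mem_univ l, mul_pos hl (hQpos l m)⟩

lemma mix_sum_one {N M : ℕ} {p : Fin N → ℝ} (hp : p ∈ stdSimplex ℝ (Fin N))
    {Q : Fin N → Fin M → ℝ} (hQrow : ∀ n, ∑ m, Q n m = 1) :
    ∑ m, ∑ l, p l * Q l m = 1 := by
  rw [Finset.sum_comm]
  calc ∑ l, ∑ m, p l * Q l m = ∑ l, p l * ∑ m, Q l m := by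
        exact Finset.sum_congr rfl fun l _ => (Finset.mul_sum _ _ _).symm
    _ = ∑ l, p l := by simp [hQrow]
    _ = 1 := hp.2

section
variable {N M : ℕ}

/-- Gibbs for KL with matching sums. -/
lemma dkl_nonneg {q r : Fin M → ℝ} (hq : ∀ m, 0 ≤ q m) (hq1 : ∑ m, q m = 1)
    (hr : ∀ m, 0 < r m) (hr1 : ∑ m, r m = 1) : 0 ≤ Dkl q r := by
  unfold Dkl
  exact gibbs_sum hq hr (by rw [hq1, hr1])

lemma ami_nonneg {p : Fin N → ℝ} (hp : p ∈ stdSimplex ℝ (Fin N))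
    {Q : Fin N → Fin M → ℝ} (hQpos : ∀ n m, 0 < Q n m) (hQrow : ∀ n, ∑ m, Q n m = 1) :
    0 ≤ AMI p Q := by
  rw [AMI_eq]
  refine Finset.sum_nonneg fun n _ => mul_nonneg (hp.1 n) ?_
  exact dkl_nonneg (fun m => (hQpos n m).le) (hQrow n) (mix_pos hp hQpos) (mix_sum_one hp hQrow)

/-- averaging with the true output distribution minimizes the weighted KL. -/
lemma sum_dkl_mix_le {p : Fin N → ℝ} {Q : Fin N → Fin M → ℝ} {r : Fin M → ℝ}
    (hp : p ∈ stdSimplex ℝ (Fin N)) (hQpos : ∀ n m, 0 < Q n m) (hQrow : ∀ n, ∑ m, Q n m = 1)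
    (hr : ∀ m, 0 < r m) (hr1 : ∑ m, r m = 1) :
    ∑ n, p n * Dkl (Q n) (fun m => ∑ l, p l * Q l m) ≤ ∑ n, p n * Dkl (Q n) r := by
  have hmix : ∀ m, 0 < ∑ l, p l * Q l m := mix_pos hp hQpos
  have key : (∑ n, p n * Dkl (Q n) r) - ∑ n, p n * Dkl (Q n) (fun m => ∑ l, p l * Q l m)
      = Dkl (fun m => ∑ l, p l * Q l m) r := by
    rw [← Finset.sum_sub_distrib]
    have step1 : ∀ n, p n * Dkl (Q n) r - p n * Dkl (Q n) (fun m => ∑ l, p l * Q l m)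
        = ∑ m, p n * Q n m * Real.log ((∑ l, p l * Q l m) / r m) := by
      intro n
      unfold Dkl
      rw [← mul_sub, ← Finset.sum_sub_distrib, Finset.mul_sum]
      refine Finset.sum_congr rfl fun m _ => ?_
      have hlog : Real.log (Q n m / r m) - Real.log (Q n m / (∑ l, p l * Q l m))
          = Real.log ((∑ l, p l * Q l m) / r m) := by
        rw [Real.log_div (hQpos n m).ne' (hr m).ne',
            Real.log_div (hQpos n m).ne' (hmix m).ne',
            Real.log_div (hmix m).ne' (hr m).ne']
        ring
      rw [← mul_sub, hlog]
      ring
    calc (∑ n, (p n * Dkl (Q n) r - p n * Dkl (Q n) (fun m => ∑ l, p l * Q l m)))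
        = ∑ n, ∑ m, p n * Q n m * Real.log ((∑ l, p l * Q l m) / r m) :=
          Finset.sum_congr rfl fun n _ => step1 n
      _ = ∑ m, ∑ n, p n * Q n m * Real.log ((∑ l, p l * Q l m) / r m) := Finset.sum_comm
      _ = ∑ m, (∑ l, p l * Q l m) * Real.log ((∑ l, p l * Q l m) / r m) := by
          refine Finset.sum_congr rfl fun m _ => ?_
          rw [← Finset.sum_mul]
      _ = Dkl (fun m => ∑ l, p l * Q l m) r := rfl
  have hge : 0 ≤ Dkl (fun m => ∑ l, p l * Q l m) r :=
    dkl_nonneg (fun m => (hmix m).le) (mix_sum_one hp hQrow) hr hr1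
  linarith

lemma wavg_le_sup' (hN : (Finset.univ : Finset (Fin N)).Nonempty) {p x : Fin N → ℝ}
    (hp : p ∈ stdSimplex ℝ (Fin N)) :
    ∑ n, p n * x n ≤ Finset.univ.sup' hN x := by
  calc ∑ n, p n * x n ≤ ∑ n, p n * Finset.univ.sup' hN x :=
        Finset.sum_le_sum fun n _ =>
          mul_le_mul_of_nonneg_left (Finset.le_sup' x (Finset.mem_univ n)) (hp.1 n)
    _ = Finset.univ.sup' hN x := by rw [← Finset.sum_mul, hp.2, one_mul]

/-- The dual objective equals a max of KL divergences against the softmax of `v`. -/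
lemma dual_eq_sup_dkl (hN : (Finset.univ : Finset (Fin N)).Nonempty)
    (hM : (Finset.univ : Finset (Fin M)).Nonempty) {Q : Fin N → Fin M → ℝ}
    (hQpos : ∀ n m, 0 < Q n m) (hQrow : ∀ n, ∑ m, Q n m = 1) (v : Fin M → ℝ) :
    Real.log (∑ m, Real.exp (v m)) +
      Finset.univ.sup' hN (fun n => ∑ m, Q n m * (Real.log (Q n m) - v m))
    = Finset.univ.sup' hN (fun n => Dkl (Q n) (fun m => Real.exp (v m) / ∑ k, Real.exp (v k))) := by
  have hS : 0 < ∑ m, Real.exp (v m) := Finset.sum_pos (fun m _ => Real.exp_pos _) hM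
  rw [Finset.add_sup']
  refine Finset.sup'_congr hN rfl fun n _ => ?_
  unfold Dkl
  have hterm : ∀ m, Real.log (Q n m / (Real.exp (v m) / ∑ k, Real.exp (v k)))
      = (Real.log (Q n m) - v m) + Real.log (∑ k, Real.exp (v k)) := by
    intro m
    rw [Real.log_div (hQpos n m).ne' (by positivity),
        Real.log_div (Real.exp_pos _).ne' hS.ne', Real.log_exp]
    ring
  calc Real.log (∑ m, Real.exp (v m)) + ∑ m, Q n m * (Real.log (Q n m) - v m)
      = ∑ m, Q n m * (Real.log (Q n m) - v m) +
          (∑ m, Q n m) * Real.log (∑ k, Real.exp (v k)) := by rw [hQrow n]; ring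
    _ = ∑ m, (Q n m * (Real.log (Q n m) - v m) + Q n m * Real.log (∑ k, Real.exp (v k))) := by
        rw [Finset.sum_add_distrib, Finset.sum_mul]
    _ = ∑ m, Q n m * ((Real.log (Q n m) - v m) + Real.log (∑ k, Real.exp (v k))) :=
        Finset.sum_congr rfl fun m _ => by ring
    _ = ∑ m, Q n m * Real.log (Q n m / (Real.exp (v m) / ∑ k, Real.exp (v k))) :=
        Finset.sum_congr rfl fun m _ => by rw [hterm m]

end

theorem robust_capacity_strong_duality
    {N M : ℕ} (hN : 0 < N) (hM : 0 < M)
    (𝒬 : Set (Fin N → Fin M → ℝ))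
    (hne : 𝒬.Nonempty) (hcomp : IsCompact 𝒬) (hconv : Convex ℝ 𝒬)
    (hQ : ∀ Q ∈ 𝒬, rowStochPos Q) :
    robustCap 𝒬 =
      sInf { x | ∃ v : Fin M → ℝ, ∃ Q ∈ 𝒬,
        x = Real.log (∑ m, Real.exp (v m)) +
          Finset.univ.sup' (Finset.univ_nonempty_iff.mpr (Fin.pos_iff_nonempty.mp hN))
            (fun n => ∑ m, Q n m * (Real.log (Q n m) - v m)) } := by
  classical
  have hNne : (Finset.univ : Finset (Fin N)).Nonempty :=
    Finset.univ_nonempty_iff.mpr (Fin.pos_iff_nonempty.mp hN)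
  have hMne : (Finset.univ : Finset (Fin M)).Nonempty :=
    Finset.univ_nonempty_iff.mpr (Fin.pos_iff_nonempty.mp hM)
  obtain ⟨Q₀, hQ₀⟩ := hne
  have n₀ : Fin N := ⟨0, hN⟩
  -- uniform positive lower bound on all entries over the compact set 𝒬
  have hcmin : ∀ nm : Fin N × Fin M, ∃ d : ℝ, 0 < d ∧ ∀ Q ∈ 𝒬, d ≤ Q nm.1 nm.2 := by
    intro nm
    obtain ⟨Qm, hQm, hminOn⟩ := hcomp.exists_isMinOn ⟨Q₀, hQ₀⟩
      (((continuous_apply nm.2).comp (continuous_apply nm.1)).continuousOn)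
    exact ⟨Qm nm.1 nm.2, (hQ Qm hQm).1 nm.1 nm.2, fun Q hQ' => isMinOn_iff.1 hminOn Q hQ'⟩
  choose cf hcfpos hcfle using hcmin
  have hNM : (Finset.univ : Finset (Fin N × Fin M)).Nonempty :=
    ⟨(⟨0, hN⟩, ⟨0, hM⟩), Finset.mem_univ _⟩
  set c := Finset.univ.inf' hNM cf with hcdef
  have hc0 : 0 < c := (Finset.lt_inf'_iff hNM).2 fun nm _ => hcfpos nm
  have hcle : ∀ Q ∈ 𝒬, ∀ n m, c ≤ Q n m := fun Q hQ' n m =>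
    le_trans (Finset.inf'_le cf (Finset.mem_univ (n, m))) (hcfle (n, m) Q hQ')
  -- the auxiliary set of output distributions
  set R : Set (Fin M → ℝ) := {r | (∀ m, c ≤ r m) ∧ ∑ m, r m = 1} with hRdef
  have hRpos : ∀ r ∈ R, ∀ m, 0 < r m := fun r hr m => lt_of_lt_of_le hc0 (hr.1 m)
  have hr₀ : (Q₀ n₀) ∈ R := ⟨fun m => hcle Q₀ hQ₀ n₀ m, (hQ Q₀ hQ₀).2 n₀⟩
  have hRconv : Convex ℝ R := by
    rintro r₁ ⟨h₁c, h₁s⟩ r₂ ⟨h₂c, h₂s⟩ a b ha hb hab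
    constructor
    · intro m
      have h1 : a * c + b * c ≤ a * r₁ m + b * r₂ m :=
        add_le_add (mul_le_mul_of_nonneg_left (h₁c m) ha) (mul_le_mul_of_nonneg_left (h₂c m) hb)
      have hc' : a * c + b * c = c := by rw [← add_mul, hab, one_mul]
      have : c ≤ a * r₁ m + b * r₂ m := hc' ▸ h1
      simpa [Pi.add_apply, Pi.smul_apply, smul_eq_mul] using this
    · simp only [Pi.add_apply, Pi.smul_apply, smul_eq_mul]
      rw [Finset.sum_add_distrib, ← Finset.mul_sum, ← Finset.mul_sum, h₁s, h₂s]
      simpa using hab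
  have hmixR : ∀ p ∈ stdSimplex ℝ (Fin N), ∀ Q ∈ 𝒬, (fun m => ∑ l, p l * Q l m) ∈ R := by
    intro p hp Q hQm
    refine ⟨fun m => ?_, mix_sum_one hp (hQ Q hQm).2⟩
    calc c = ∑ l, p l * c := by rw [← Finset.sum_mul, hp.2, one_mul]
      _ ≤ ∑ l, p l * Q l m := Finset.sum_le_sum fun l _ =>
          mul_le_mul_of_nonneg_left (hcle Q hQm l m) (hp.1 l)
  -- the joint constraint set for the minimax argument
  set Z : Set ((Fin N → Fin M → ℝ) × (Fin M → ℝ)) := 𝒬 ×ˢ R with hZdef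
  have hZne : Z.Nonempty := ⟨(Q₀, Q₀ n₀), ⟨hQ₀, hr₀⟩⟩
  have hcconv : ∀ n, ConvexOn ℝ Z (fun z : (Fin N → Fin M → ℝ) × (Fin M → ℝ) => Dkl (z.1 n) z.2) := by
    intro n
    refine ⟨hconv.prod hRconv, ?_⟩
    rintro ⟨Q₁, r₁⟩ ⟨h₁Q, h₁r⟩ ⟨Q₂, r₂⟩ ⟨h₂Q, h₂r⟩ a b ha hb hab
    show Dkl ((a • (Q₁, r₁) + b • (Q₂, r₂)).1 n) ((a • (Q₁, r₁) + b • (Q₂, r₂)).2)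
      ≤ a * Dkl (Q₁ n) r₁ + b * Dkl (Q₂ n) r₂
    unfold Dkl
    rw [Finset.mul_sum, Finset.mul_sum, ← Finset.sum_add_distrib]
    refine Finset.sum_le_sum fun m _ => ?_
    have e1 : (a • (Q₁, r₁) + b • (Q₂, r₂)).1 n m = a * Q₁ n m + b * Q₂ n m := rfl
    have e2 : (a • (Q₁, r₁) + b • (Q₂, r₂)).2 m = a * r₁ m + b * r₂ m := rfl
    rw [e1, e2]
    exact kl_point_convex ha hb hab ((hQ Q₁ h₁Q).1 n m) (hRpos r₁ h₁r m)
      ((hQ Q₂ h₂Q).1 n m) (hRpos r₂ h₂r m)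
  have hcnn : ∀ n, ∀ z ∈ Z, 0 ≤ Dkl (z.1 n) z.2 := fun n z hz =>
    dkl_nonneg (fun m => ((hQ z.1 hz.1).1 n m).le) ((hQ z.1 hz.1).2 n)
      (hRpos z.2 hz.2) hz.2.2
  obtain ⟨pstar, hpstar, hmini⟩ :=
    minimax_sep hNne hZne (fun n z => Dkl (z.1 n) z.2) hcconv hcnn
  -- softmax distribution facts
  have hexpS : ∀ v : Fin M → ℝ, 0 < ∑ k, Real.exp (v k) := fun v =>
    Finset.sum_pos (fun k _ => Real.exp_pos _) hMne
  have hsoftpos : ∀ v : Fin M → ℝ, ∀ m, 0 < Real.exp (v m) / ∑ k, Real.exp (v k) :=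
    fun v m => div_pos (Real.exp_pos _) (hexpS v)
  have hsoft1 : ∀ v : Fin M → ℝ, ∑ m, Real.exp (v m) / ∑ k, Real.exp (v k) = 1 := fun v => by
    rw [← Finset.sum_div, div_self (hexpS v).ne']
  -- the key pointwise inequality
  have keyLE : ∀ p ∈ stdSimplex ℝ (Fin N), ∀ Q ∈ 𝒬, ∀ r : Fin M → ℝ,
      (∀ m, 0 < r m) → (∑ m, r m = 1) →
      AMI p Q ≤ Finset.univ.sup' hNne (fun n => Dkl (Q n) r) := by
    intro p hp Q hQm r hrpos hr1
    calc AMI p Q = ∑ n, p n * Dkl (Q n) (fun m => ∑ l, p l * Q l m) := AMI_eq p Q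
      _ ≤ ∑ n, p n * Dkl (Q n) r := sum_dkl_mix_le hp (hQ Q hQm).1 (hQ Q hQm).2 hrpos hr1
      _ ≤ _ := wavg_le_sup' hNne hp
  -- membership of sup-KL values in the dual set
  have hTmem : ∀ Q ∈ 𝒬, ∀ r : Fin M → ℝ, (∀ m, 0 < r m) → (∑ m, r m = 1) →
      (Finset.univ.sup' hNne (fun n => Dkl (Q n) r)) ∈
        { x | ∃ v : Fin M → ℝ, ∃ Q ∈ 𝒬,
          x = Real.log (∑ m, Real.exp (v m)) +
            Finset.univ.sup' (Finset.univ_nonempty_iff.mpr (Fin.pos_iff_nonempty.mp hN))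
              (fun n => ∑ m, Q n m * (Real.log (Q n m) - v m)) } := by
    intro Q hQm r hrpos hr1
    refine ⟨fun m => Real.log (r m), Q, hQm, ?_⟩
    have h1 : ∑ m, Real.exp (Real.log (r m)) = 1 := by
      rw [Finset.sum_congr rfl fun m _ => Real.exp_log (hrpos m)]
      exact hr1
    rw [h1, Real.log_one, zero_add]
    have hfun : (fun n => Dkl (Q n) r)
        = fun n => ∑ m, Q n m * (Real.log (Q n m) - Real.log (r m)) := by
      funext n
      unfold Dkl
      exact Finset.sum_congr rfl fun m _ => by
        rw [Real.log_div ((hQ Q hQm).1 n m).ne' (hrpos m).ne']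
    rw [hfun]
  -- rewriting elements of the dual set
  have hTrep : ∀ (v : Fin M → ℝ) (Q : Fin N → Fin M → ℝ), Q ∈ 𝒬 →
      Real.log (∑ m, Real.exp (v m)) +
        Finset.univ.sup' (Finset.univ_nonempty_iff.mpr (Fin.pos_iff_nonempty.mp hN))
          (fun n => ∑ m, Q n m * (Real.log (Q n m) - v m))
      = Finset.univ.sup' hNne
          (fun n => Dkl (Q n) (fun m => Real.exp (v m) / ∑ k, Real.exp (v k))) := by
    intro v Q hQm
    exact dual_eq_sup_dkl hNne hMne (hQ Q hQm).1 (hQ Q hQm).2 v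
  -- nonemptiness and boundedness bookkeeping
  have hInnerNe : ∀ p : Fin N → ℝ, {y | ∃ Q ∈ 𝒬, y = AMI p Q}.Nonempty :=
    fun p => ⟨AMI p Q₀, Q₀, hQ₀, rfl⟩
  have hInnerBdd : ∀ p ∈ stdSimplex ℝ (Fin N), BddBelow {y | ∃ Q ∈ 𝒬, y = AMI p Q} := by
    rintro p hp
    refine ⟨0, ?_⟩
    rintro y ⟨Q, hQm, rfl⟩
    exact ami_nonneg hp (hQ Q hQm).1 (hQ Q hQm).2
  have hpu : (fun _ : Fin N => (N : ℝ)⁻¹) ∈ stdSimplex ℝ (Fin N) := by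
    constructor
    · intro n
      positivity
    · rw [Finset.sum_const, Finset.card_univ, Fintype.card_fin, nsmul_eq_mul]
      field_simp
  have hSne : { x | ∃ p ∈ stdSimplex ℝ (Fin N),
      x = sInf { y | ∃ Q ∈ 𝒬, y = AMI p Q } }.Nonempty :=
    ⟨_, ⟨_, hpu, rfl⟩⟩
  have hTne : { x | ∃ v : Fin M → ℝ, ∃ Q ∈ 𝒬,
      x = Real.log (∑ m, Real.exp (v m)) +
        Finset.univ.sup' (Finset.univ_nonempty_iff.mpr (Fin.pos_iff_nonempty.mp hN))
          (fun n => ∑ m, Q n m * (Real.log (Q n m) - v m)) }.Nonempty :=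
    ⟨_, hTmem Q₀ hQ₀ (Q₀ n₀) (fun m => hRpos _ hr₀ m) hr₀.2⟩
  have hTbdd : BddBelow { x | ∃ v : Fin M → ℝ, ∃ Q ∈ 𝒬,
      x = Real.log (∑ m, Real.exp (v m)) +
        Finset.univ.sup' (Finset.univ_nonempty_iff.mpr (Fin.pos_iff_nonempty.mp hN))
          (fun n => ∑ m, Q n m * (Real.log (Q n m) - v m)) } := by
    refine ⟨0, ?_⟩
    rintro x ⟨v, Q, hQm, rfl⟩
    rw [hTrep v Q hQm]
    refine le_trans ?_ (Finset.le_sup'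
      (fun n => Dkl (Q n) (fun m => Real.exp (v m) / ∑ k, Real.exp (v k))) (Finset.mem_univ n₀))
    exact dkl_nonneg (fun m => ((hQ Q hQm).1 n₀ m).le) ((hQ Q hQm).2 n₀)
      (hsoftpos v) (hsoft1 v)
  -- a generic upper bound: every primal value is below every dual value
  have hprimal_le : ∀ p ∈ stdSimplex ℝ (Fin N), ∀ x ∈ { x | ∃ v : Fin M → ℝ, ∃ Q ∈ 𝒬,
      x = Real.log (∑ m, Real.exp (v m)) +
        Finset.univ.sup' (Finset.univ_nonempty_iff.mpr (Fin.pos_iff_nonempty.mp hN))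
          (fun n => ∑ m, Q n m * (Real.log (Q n m) - v m)) },
      sInf { y | ∃ Q ∈ 𝒬, y = AMI p Q } ≤ x := by
    rintro p hp x ⟨v, Q, hQm, rfl⟩
    rw [hTrep v Q hQm]
    refine le_trans (csInf_le (hInnerBdd p hp) ⟨Q, hQm, rfl⟩) ?_
    exact keyLE p hp Q hQm _ (hsoftpos v) (hsoft1 v)
  have hSbdd : BddAbove { x | ∃ p ∈ stdSimplex ℝ (Fin N),
      x = sInf { y | ∃ Q ∈ 𝒬, y = AMI p Q } } := by
    obtain ⟨x₀, hx₀⟩ := hTne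
    refine ⟨x₀, ?_⟩
    rintro s ⟨p, hp, rfl⟩
    exact hprimal_le p hp x₀ hx₀
  unfold robustCap
  apply le_antisymm
  · refine csSup_le hSne ?_
    rintro s ⟨p, hp, rfl⟩
    exact le_csInf hTne (hprimal_le p hp)
  · -- hard direction via minimax
    set β := sInf {x | ∃ z' ∈ Z, x = Finset.univ.sup' hNne
      fun n => Dkl (z'.1 n) z'.2} with hβdef
    have h1 : sInf { x | ∃ v : Fin M → ℝ, ∃ Q ∈ 𝒬,
        x = Real.log (∑ m, Real.exp (v m)) +
          Finset.univ.sup' (Finset.univ_nonempty_iff.mpr (Fin.pos_iff_nonempty.mp hN))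
            (fun n => ∑ m, Q n m * (Real.log (Q n m) - v m)) } ≤ β := by
      obtain ⟨z₀, hz₀⟩ := hZne
      refine le_csInf ⟨_, z₀, hz₀, rfl⟩ ?_
      rintro x ⟨z, hz, rfl⟩
      exact csInf_le hTbdd (hTmem z.1 hz.1 z.2 (fun m => hRpos z.2 hz.2 m) hz.2.2)
    have h2 : β ≤ sInf { y | ∃ Q ∈ 𝒬, y = AMI pstar Q } := by
      refine le_csInf (hInnerNe pstar) ?_
      rintro y ⟨Q, hQm, rfl⟩
      rw [AMI_eq]
      exact hmini (Q, fun m => ∑ l, pstar l * Q l m) ⟨hQm, hmixR pstar hpstar Q hQm⟩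
    have h3 : sInf { y | ∃ Q ∈ 𝒬, y = AMI pstar Q } ≤
        sSup { x | ∃ p ∈ stdSimplex ℝ (Fin N),
          x = sInf { y | ∃ Q ∈ 𝒬, y = AMI p Q } } :=
      le_csSup hSbdd ⟨pstar, hpstar, rfl⟩
    linarith
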